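/- arXiv:0906.2747 — 2 statements merged into one kernel-verified Lean document; each statement's English description precedes it below -/
import Mathlib

section
/- The algebra of invariant polynomial functions on the Lie algebra sl_2(ℂ) under the adjoint action of SL_2(ℂ) is a polynomial algebra generated by the determinant (equivalently, by the quadratic Casimir X ↦ tr(X²)). -/
open Matrix

/-- A function on 2×2 complex matrices is a polynomial function if it is given by a
polynomial in the matrix entries. -/
def IsPolyFun2 (f : Matrix (Fin 2) (Fin 2) ℂ → ℂ) : Prop :=
  ∃ F : MvPolynomial (Fin 2 × Fin 2) ℂ,
    ∀ X, f X = MvPolynomial.eval (fun p => X p.1 p.2) F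

private theorem mv_aeval_eq_eval' {σ : Type*} (w : σ → ℂ) (F : MvPolynomial σ ℂ) :
    MvPolynomial.aeval w F = MvPolynomial.eval w F := by
  simp [MvPolynomial.aeval_def]

private theorem poly_aeval_eq_eval' (x : ℂ) (p : Polynomial ℂ) :
    Polynomial.aeval x p = Polynomial.eval x p := by
  exact congrFun (Polynomial.coe_aeval_eq_eval x) p

private theorem sl2_conj_aux (a b c s : ℂ) (hb : b ≠ 0) (hs : s ^ 2 = b) :
    ∃ g : Matrix.SpecialLinearGroup (Fin 2) ℂ,
      (g : Matrix (Fin 2) (Fin 2) ℂ) * !![a,b;c,-a] *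
        ((g⁻¹ : Matrix.SpecialLinearGroup (Fin 2) ℂ) : Matrix (Fin 2) (Fin 2) ℂ)
        = !![0, 1; a^2 + b*c, 0] := by
  have key : s / b * (s / b) * b = 1 := by
    rw [div_mul_div_comm, ← pow_two, hs, div_mul_eq_mul_div, ← pow_two,
      div_self (pow_ne_zero 2 hb)]
  have key2 : (s/b)^2 * b = 1 := by rw [pow_two]; exact key
  refine ⟨⟨(s/b) • !![1,0;a,b], ?_⟩, ?_⟩
  · rw [Matrix.det_smul, Matrix.det_fin_two_of]
    simpa using key2
  · show _ * _ * adjugate ((s/b) • !![1,0;a,b]) = _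
    show ((s/b) • !![1,0;a,b]) * _ * adjugate ((s/b) • !![1,0;a,b]) = _
    rw [Matrix.adjugate_smul, Matrix.adjugate_fin_two_of]
    simp only [Matrix.smul_mul, Matrix.mul_smul, Matrix.mul_fin_two, smul_smul]
    have h1 : (s / b) ^ (Fintype.card (Fin 2) - 1) * (s / b) = 1 / b := by
      simp only [Fintype.card_fin]
      rw [pow_one, eq_div_iff hb]
      exact key
    rw [h1]
    ext i j
    fin_cases i <;> fin_cases j <;>
      · rw [Matrix.smul_apply, smul_eq_mul, one_div, inv_mul_eq_div, div_eq_iff hb]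
        simp only [Matrix.cons_val', Matrix.cons_val_zero, Matrix.cons_val_one,
          Matrix.head_cons, Matrix.empty_val', Matrix.cons_val_fin_one,
          Matrix.head_fin_const, Fin.isValue, Fin.zero_eta, Fin.mk_one]
        ring_nf
        simp
        try ring

/-- **Invariant polynomials on `sl₂(ℂ)`.**  Every polynomial function on the trace-zero
2×2 matrices invariant under conjugation by `SL₂(ℂ)` is a polynomial in the determinant
(equivalently, in the quadratic Casimir `X ↦ tr(X²)`), and this polynomial is unique:
the invariant ring is the polynomial algebra generated by `det`. -/
theorem sl2_invariants_generated_by_det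
    (f : Matrix (Fin 2) (Fin 2) ℂ → ℂ) (hpoly : IsPolyFun2 f)
    (hinv : ∀ g : Matrix.SpecialLinearGroup (Fin 2) ℂ, ∀ X : Matrix (Fin 2) (Fin 2) ℂ,
      X.trace = 0 → f ((g : Matrix (Fin 2) (Fin 2) ℂ) * X * ((g⁻¹ : Matrix.SpecialLinearGroup (Fin 2) ℂ) : Matrix (Fin 2) (Fin 2) ℂ)) = f X) :
    ∃! p : Polynomial ℂ, ∀ X : Matrix (Fin 2) (Fin 2) ℂ,
      X.trace = 0 → f X = p.eval X.det := by
  obtain ⟨F, hF⟩ := hpoly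
  have hconj : ∀ a b c : ℂ, b ≠ 0 → f !![a,b;c,-a] = f !![0,1;a^2+b*c,0] := by
    intro a b c hb
    obtain ⟨s, hs⟩ := Complex.isAlgClosed.exists_pow_nat_eq b (n := 2) (by norm_num)
    obtain ⟨g, hg⟩ := sl2_conj_aux a b c s hb hs
    rw [← hg]
    exact (hinv g !![a,b;c,-a] (by simp [Matrix.trace_fin_two])).symm
  set g : Fin 2 × Fin 2 → Polynomial ℂ :=
    fun q => !![(0 : Polynomial ℂ), 1; -Polynomial.X, 0] q.1 q.2 with hg_def
  set p : Polynomial ℂ := MvPolynomial.aeval g F with hp_def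
  have hp : ∀ d : ℂ, p.eval d = f !![0,1;-d,0] := by
    intro d
    have hcomp := congrFun (congrArg DFunLike.coe
      (MvPolynomial.comp_aeval (f := g) (Polynomial.aeval d : Polynomial ℂ →ₐ[ℂ] ℂ))) F
    simp only [AlgHom.coe_comp, Function.comp_apply] at hcomp
    have hw : (fun i : Fin 2 × Fin 2 => (Polynomial.aeval d : Polynomial ℂ →ₐ[ℂ] ℂ) (g i))
        = fun q : Fin 2 × Fin 2 => (!![0,1;-d,0] : Matrix (Fin 2) (Fin 2) ℂ) q.1 q.2 := by
      funext q
      obtain ⟨i, j⟩ := q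
      fin_cases i <;> fin_cases j <;> simp [hg_def, poly_aeval_eq_eval']
    calc p.eval d = Polynomial.aeval d (MvPolynomial.aeval g F) := by
          rw [poly_aeval_eq_eval', hp_def]
      _ = MvPolynomial.aeval (fun i => (Polynomial.aeval d : Polynomial ℂ →ₐ[ℂ] ℂ) (g i)) F := hcomp
      _ = f !![0,1;-d,0] := by rw [hw, mv_aeval_eq_eval', ← hF]
  have main : ∀ X : Matrix (Fin 2) (Fin 2) ℂ, X.trace = 0 → f X = p.eval X.det := by
    set t : MvPolynomial (Fin 3) ℂ :=
      -(MvPolynomial.X 0)^2 - MvPolynomial.X 1 * MvPolynomial.X 2 with ht_def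
    set φ : Fin 2 × Fin 2 → MvPolynomial (Fin 3) ℂ :=
      fun q => !![MvPolynomial.X 0, MvPolynomial.X 1;
                  MvPolynomial.X 2, -MvPolynomial.X 0] q.1 q.2 with hφ_def
    set A : MvPolynomial (Fin 3) ℂ := MvPolynomial.aeval φ F with hA_def
    set B : MvPolynomial (Fin 3) ℂ := Polynomial.aeval t p with hB_def
    have hAeval : ∀ v : Fin 3 → ℂ,
        MvPolynomial.eval v A = f !![v 0, v 1; v 2, -(v 0)] := by
      intro v
      have hcomp := congrFun (congrArg DFunLike.coe
        (MvPolynomial.comp_aeval (f := φ)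
          (MvPolynomial.aeval v : MvPolynomial (Fin 3) ℂ →ₐ[ℂ] ℂ))) F
      simp only [AlgHom.coe_comp, Function.comp_apply] at hcomp
      have hw : (fun i : Fin 2 × Fin 2 =>
            (MvPolynomial.aeval v : MvPolynomial (Fin 3) ℂ →ₐ[ℂ] ℂ) (φ i))
          = fun q : Fin 2 × Fin 2 =>
            (!![v 0, v 1; v 2, -(v 0)] : Matrix (Fin 2) (Fin 2) ℂ) q.1 q.2 := by
        funext q
        obtain ⟨i, j⟩ := q
        fin_cases i <;> fin_cases j <;> simp [hφ_def, mv_aeval_eq_eval']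
      calc MvPolynomial.eval v A = MvPolynomial.aeval v (MvPolynomial.aeval φ F) := by
            rw [mv_aeval_eq_eval', hA_def]
        _ = MvPolynomial.aeval (fun i =>
              (MvPolynomial.aeval v : MvPolynomial (Fin 3) ℂ →ₐ[ℂ] ℂ) (φ i)) F := hcomp
        _ = f !![v 0, v 1; v 2, -(v 0)] := by rw [hw, mv_aeval_eq_eval', ← hF]
    have hBeval : ∀ v : Fin 3 → ℂ,
        MvPolynomial.eval v B = p.eval (-(v 0)^2 - v 1 * v 2) := by
      intro v
      have h1 : MvPolynomial.aeval v (Polynomial.aeval t p)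
          = Polynomial.aeval (MvPolynomial.aeval v t) p :=
        (Polynomial.aeval_algHom_apply
          (MvPolynomial.aeval v : MvPolynomial (Fin 3) ℂ →ₐ[ℂ] ℂ) t p).symm
      have h2 : MvPolynomial.aeval v t = -(v 0)^2 - v 1 * v 2 := by
        simp [ht_def]
      rw [← mv_aeval_eq_eval', hB_def, h1, h2, poly_aeval_eq_eval']
    have hAB : A = B := by
      have hzero : MvPolynomial.X 1 * (A - B) = 0 := by
        apply MvPolynomial.funext
        intro v
        simp only [_root_.map_mul, _root_.map_sub, MvPolynomial.eval_X, map_zero]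
        rcases eq_or_ne (v 1) 0 with h | h
        · rw [h]; ring
        · rw [hAeval v, hBeval v, hconj (v 0) (v 1) (v 2) h]
          have h3 := hp (-((v 0)^2 + (v 1)*(v 2)))
          rw [neg_neg] at h3
          rw [show -(v 0)^2 - v 1 * v 2 = -((v 0)^2 + (v 1)*(v 2)) by ring, h3]
          ring
      rcases mul_eq_zero.mp hzero with h | h
      · exact absurd h (MvPolynomial.X_ne_zero 1)
      · exact sub_eq_zero.mp h
    intro X hX
    have hX11 : X 1 1 = -(X 0 0) := by
      have h := Matrix.trace_fin_two X
      rw [hX] at h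
      linear_combination -h
    have hXeq : X = !![X 0 0, X 0 1; X 1 0, -(X 0 0)] := by
      have h := Matrix.eta_fin_two X
      rw [hX11] at h
      exact h
    set v : Fin 3 → ℂ := ![X 0 0, X 0 1, X 1 0] with hv_def
    have e1 : MvPolynomial.eval v A = f X := by
      rw [hAeval v]
      congr 1
      rw [hXeq]
      ext i j
      fin_cases i <;> fin_cases j <;> simp [hv_def]
    have e2 : MvPolynomial.eval v B = p.eval X.det := by
      rw [hBeval v]
      congr 1
      rw [Matrix.det_fin_two, hX11]
      have hv0 : v 0 = X 0 0 := by simp [hv_def]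
      have hv1 : v 1 = X 0 1 := by simp [hv_def]
      have hv2 : v 2 = X 1 0 := by simp [hv_def]
      rw [hv0, hv1, hv2]
      ring
    rw [← e1, ← e2, hAB]
  refine ⟨p, main, ?_⟩
  intro q hq
  apply Polynomial.funext
  intro d
  have h1 := hq !![0,1;-d,0] (by simp [Matrix.trace_fin_two])
  have h2 : (!![0,1;-d,0] : Matrix (Fin 2) (Fin 2) ℂ).det = d := by
    simp [Matrix.det_fin_two]
  rw [h2] at h1
  rw [← h1, hp d]
end

section
/- Chevalley restriction for gl_n: restriction to the diagonal matrices induces an isomorphism from the algebra of conjugation-invariant polynomial functions on gl_n(ℂ) to the algebra of symmetric polynomials in n variables; in particular it is freely generated by the coefficients of the characteristic polynomial, of degrees 1, 2, …, n. -/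
open Matrix

variable (n : ℕ)

/-- A function on `n×n` complex matrices is a polynomial function if it is given by a
polynomial in the matrix entries. -/
def IsPolyFun (n : ℕ) (f : Matrix (Fin n) (Fin n) ℂ → ℂ) : Prop :=
  ∃ F : MvPolynomial (Fin n × Fin n) ℂ,
    ∀ X, f X = MvPolynomial.eval (fun p => X p.1 p.2) F

/-- A function on `gl_n(ℂ)` is invariant if it is constant on conjugacy classes under
`GL_n(ℂ)`. -/
def IsInvariantFun (n : ℕ) (f : Matrix (Fin n) (Fin n) ℂ → ℂ) : Prop :=
  ∀ g : GL (Fin n) ℂ, ∀ X : Matrix (Fin n) (Fin n) ℂ,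
    f ((g : Matrix (Fin n) (Fin n) ℂ) * X * ((g⁻¹ : GL (Fin n) ℂ) : Matrix (Fin n) (Fin n) ℂ)) = f X

namespace ChevGL


noncomputable section

variable (n : ℕ)

def gen : Matrix (Fin n) (Fin n) (MvPolynomial (Fin n × Fin n) ℂ) :=
  Matrix.of fun i j => MvPolynomial.X (i, j)

def cpc (k : ℕ) : MvPolynomial (Fin n × Fin n) ℂ := (gen n).charpoly.coeff k

variable {n}

lemma eval_cpc (k : ℕ) (X : Matrix (Fin n) (Fin n) ℂ) :
    MvPolynomial.eval (fun p => X p.1 p.2) (cpc n k) = X.charpoly.coeff k := by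
  have h : (gen n).map (MvPolynomial.eval fun p => X p.1 p.2) = X := by
    ext i j
    simp [gen]
  conv_rhs => rw [← h]
  rw [Matrix.charpoly_map, Polynomial.coeff_map, cpc]

lemma charpoly_units_conj (g : (Matrix (Fin n) (Fin n) ℂ)ˣ) (X : Matrix (Fin n) (Fin n) ℂ) :
    ((g : Matrix (Fin n) (Fin n) ℂ) * X * ((g⁻¹ : (Matrix (Fin n) (Fin n) ℂ)ˣ) :
      Matrix (Fin n) (Fin n) ℂ)).charpoly = X.charpoly := by
  set f : ℂ →+* Polynomial ℂ := (Polynomial.C : ℂ →+* Polynomial ℂ) with hf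
  have h1 : ((g : Matrix (Fin n) (Fin n) ℂ)).map f * ((↑g⁻¹ : Matrix (Fin n) (Fin n) ℂ)).map f
      = 1 := by
    rw [← Matrix.map_mul, Units.mul_inv, Matrix.map_one f (map_zero f) (map_one f)]
  have hs : ((g : Matrix (Fin n) (Fin n) ℂ)).map f * Matrix.scalar (Fin n) Polynomial.X *
      ((↑g⁻¹ : Matrix (Fin n) (Fin n) ℂ)).map f = Matrix.scalar (Fin n) Polynomial.X := by
    rw [← Matrix.scalar_commute Polynomial.X (fun r' => by exact mul_comm _ _), mul_assoc, h1, mul_one]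
  have hc : charmatrix ((g : Matrix (Fin n) (Fin n) ℂ) * X * (↑g⁻¹ : Matrix (Fin n) (Fin n) ℂ))
      = (g : Matrix (Fin n) (Fin n) ℂ).map f * charmatrix X *
        ((↑g⁻¹ : Matrix (Fin n) (Fin n) ℂ)).map f := by
    simp only [charmatrix, RingHom.mapMatrix_apply, ← hf]
    rw [mul_sub, sub_mul, hs, Matrix.map_mul, Matrix.map_mul]
  rw [Matrix.charpoly, hc, det_mul, det_mul, mul_comm, ← mul_assoc, mul_comm (((↑g⁻¹ :
    Matrix (Fin n) (Fin n) ℂ)).map f).det, ← det_mul, h1, det_one, one_mul, Matrix.charpoly]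

lemma charpoly_diagonal (d : Fin n → ℂ) :
    (diagonal d).charpoly = ∏ i, (Polynomial.X - Polynomial.C (d i)) := by
  rw [charpoly_of_upperTriangular (diagonal d) (blockTriangular_diagonal d)]
  simp

lemma list_prod_eq (l : List ℂ) {m : ℕ} (hl : l.length = m) :
    (l.map fun a => Polynomial.X - Polynomial.C a).prod
      = ∏ i : Fin m, (Polynomial.X - Polynomial.C (l.get (Fin.cast hl.symm i))) := by
  subst hl
  conv_lhs => rw [← List.ofFn_get l]
  rw [List.map_ofFn, List.prod_ofFn]
  rfl

lemma exists_roots (X : Matrix (Fin n) (Fin n) ℂ) :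
    ∃ r : Fin n → ℂ, X.charpoly = ∏ i, (Polynomial.X - Polynomial.C (r i)) := by
  have hm : X.charpoly.Monic := Matrix.charpoly_monic X
  have hs : X.charpoly.Splits := IsAlgClosed.splits X.charpoly
  have hdeg : X.charpoly.natDegree = n := by
    rw [Matrix.charpoly_natDegree_eq_dim, Fintype.card_fin]
  have hcard : Multiset.card X.charpoly.roots = n := by
    rw [Polynomial.splits_iff_card_roots.mp hs, hdeg]
  have hl : X.charpoly.roots.toList.length = n := by
    rw [Multiset.length_toList, hcard]
  refine ⟨fun i => X.charpoly.roots.toList.get (Fin.cast hl.symm i), ?_⟩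
  have h := hs.eq_prod_roots_of_monic hm
  conv_lhs => rw [h, ← Multiset.coe_toList X.charpoly.roots]
  rw [Multiset.map_coe, Multiset.prod_coe, list_prod_eq _ hl]

lemma eval_charpoly (X : Matrix (Fin n) (Fin n) ℂ) (μ : ℂ) :
    X.charpoly.eval μ = (diagonal (fun _ : Fin n => μ) - X).det := by
  have h2 : (charmatrix X).map (Polynomial.evalRingHom μ) = diagonal (fun _ : Fin n => μ) - X := by
    ext i j
    by_cases h : i = j
    · subst h; simp [charmatrix_apply_eq]
    · simp [charmatrix_apply_ne _ _ _ h, diagonal_apply_ne _ h]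
  have h3 : (Polynomial.evalRingHom μ) X.charmatrix.det
      = ((Polynomial.evalRingHom μ).mapMatrix X.charmatrix).det := RingHom.map_det _ _
  rw [Matrix.charpoly]
  rw [show Polynomial.eval μ X.charmatrix.det = (Polynomial.evalRingHom μ) X.charmatrix.det
    from rfl, h3, RingHom.mapMatrix_apply, h2]

lemma exists_conj_diagonal {X : Matrix (Fin n) (Fin n) ℂ} {r : Fin n → ℂ}
    (h : X.charpoly = ∏ i, (Polynomial.X - Polynomial.C (r i)))
    (hr : Function.Injective r) :
    ∃ g : (Matrix (Fin n) (Fin n) ℂ)ˣ,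
      X = (g : Matrix (Fin n) (Fin n) ℂ) * diagonal r *
        ((g⁻¹ : (Matrix (Fin n) (Fin n) ℂ)ˣ) : Matrix (Fin n) (Fin n) ℂ) := by
  have hev : ∀ i, ∃ v ≠ 0, X *ᵥ v = r i • v := by
    intro i
    have hroot : X.charpoly.eval (r i) = 0 := by
      rw [h, Polynomial.eval_prod]
      refine Finset.prod_eq_zero (Finset.mem_univ i) ?_
      simp
    rw [eval_charpoly] at hroot
    obtain ⟨v, hv0, hv⟩ := (Matrix.exists_mulVec_eq_zero_iff).2 hroot
    refine ⟨v, hv0, ?_⟩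
    rw [Matrix.sub_mulVec] at hv
    have hd : diagonal (fun _ : Fin n => r i) *ᵥ v = r i • v := by
      ext j; simp []
    rw [hd] at hv
    exact (sub_eq_zero.mp hv).symm
  choose v hv0 hv using hev
  have hE : ∀ i, Module.End.HasEigenvector (Matrix.mulVecLin X : Module.End ℂ (Fin n → ℂ)) (r i) (v i) := fun i =>
    ⟨Module.End.mem_eigenspace_iff.2 (by rw [Matrix.mulVecLin_apply]; exact hv i), hv0 i⟩
  have li : LinearIndependent ℂ v :=
    Module.End.eigenvectors_linearIndependent' (Matrix.mulVecLin X) r hr v hE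
  have hu : IsUnit ((Matrix.of v)ᵀ) := by
    rw [Matrix.isUnit_transpose]
    exact Matrix.linearIndependent_rows_iff_isUnit.mp li
  set u : (Matrix (Fin n) (Fin n) ℂ)ˣ := hu.unit with hu_def
  have hcu : (u : Matrix (Fin n) (Fin n) ℂ) = (Matrix.of v)ᵀ := IsUnit.unit_spec hu
  have hX : X * (u : Matrix (Fin n) (Fin n) ℂ) = (u : Matrix (Fin n) (Fin n) ℂ) * diagonal r := by
    rw [hcu]
    ext i j
    have h1 : (X * (Matrix.of v)ᵀ) i j = (X *ᵥ v j) i := by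
      simp [Matrix.mul_apply, Matrix.mulVec, dotProduct]
    rw [h1, hv j, Matrix.mul_diagonal]
    simp [mul_comm]
  refine ⟨u, ?_⟩
  calc X = X * ((u : Matrix (Fin n) (Fin n) ℂ) * ((u⁻¹ : (Matrix (Fin n) (Fin n) ℂ)ˣ) :
      Matrix (Fin n) (Fin n) ℂ)) := by rw [u.mul_inv]; rw [mul_one]
  _ = (X * (u : Matrix (Fin n) (Fin n) ℂ)) * ((u⁻¹ : (Matrix (Fin n) (Fin n) ℂ)ˣ) :
      Matrix (Fin n) (Fin n) ℂ) := by rw [mul_assoc]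
  _ = (u : Matrix (Fin n) (Fin n) ℂ) * diagonal r * ((u⁻¹ : (Matrix (Fin n) (Fin n) ℂ)ˣ) :
      Matrix (Fin n) (Fin n) ℂ) := by rw [hX]

lemma aeval_eq_eval {σ : Type*} (f : σ → ℂ) (p : MvPolynomial σ ℂ) :
    MvPolynomial.aeval f p = MvPolynomial.eval f p := by
  rw [← MvPolynomial.coe_aeval_eq_eval]
  rfl

variable (n) in
def esymmFun : Fin n → MvPolynomial (Fin n) ℂ :=
  fun i => MvPolynomial.esymm (Fin n) ℂ ((i : ℕ) + 1)

variable (n) in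
def pSign (q : MvPolynomial (Fin n) ℂ) : MvPolynomial (Fin n) ℂ :=
  MvPolynomial.bind₁
    (fun i : Fin n => MvPolynomial.C ((-1 : ℂ) ^ ((i : ℕ) + 1)) * MvPolynomial.X (Fin.rev i)) q

lemma rev_val (i : Fin n) : ((Fin.rev i : Fin n) : ℕ) = n - 1 - (i : ℕ) := by
  simp [Fin.rev]
  omega

lemma coeff_prod_eq (r : Fin n → ℂ) (i : Fin n) :
    (∏ j, (Polynomial.X - Polynomial.C (r j))).coeff ((Fin.rev i : Fin n) : ℕ)
      = (-1 : ℂ) ^ ((i : ℕ) + 1)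
        * MvPolynomial.eval r (MvPolynomial.esymm (Fin n) ℂ ((i : ℕ) + 1)) := by
  have hcard : Multiset.card (Finset.univ.val.map r) = n := by simp
  have hprod : (∏ j, (Polynomial.X - Polynomial.C (r j)))
      = ((Finset.univ.val.map r).map fun t => Polynomial.X - Polynomial.C t).prod := by
    rw [Multiset.map_map, Finset.prod_eq_multiset_prod]
    rfl
  have hle : ((Fin.rev i : Fin n) : ℕ) ≤ Multiset.card (Finset.univ.val.map r) := by
    rw [hcard, rev_val]; omega
  rw [hprod, Multiset.prod_X_sub_C_coeff _ hle, hcard]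
  have hk : n - ((Fin.rev i : Fin n) : ℕ) = (i : ℕ) + 1 := by
    rw [rev_val]
    have := i.2
    omega
  rw [hk]
  congr 1
  rw [← aeval_eq_eval, MvPolynomial.aeval_esymm_eq_multiset_esymm]

set_option maxHeartbeats 1000000 in
lemma eval_pSign (q : MvPolynomial (Fin n) ℂ) (c : Fin n → ℂ) (r : Fin n → ℂ)
    (hc : ∀ i : Fin n, c i = (∏ j, (Polynomial.X - Polynomial.C (r j))).coeff (i : ℕ)) :
    MvPolynomial.eval c (pSign n q)
      = MvPolynomial.eval r (MvPolynomial.aeval (esymmFun n) q) := by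
  rw [← aeval_eq_eval, ← aeval_eq_eval, pSign, MvPolynomial.aeval_bind₁,
    MvPolynomial.aeval_eq_bind₁ (esymmFun n), MvPolynomial.aeval_bind₁]
  have key : ∀ i : Fin n, (MvPolynomial.aeval c)
      (MvPolynomial.C ((-1:ℂ) ^ ((i:ℕ) + 1)) * MvPolynomial.X (Fin.rev i))
      = (MvPolynomial.aeval r) (esymmFun n i) := by
    intro i
    rw [_root_.map_mul, MvPolynomial.aeval_C, MvPolynomial.aeval_X, aeval_eq_eval, hc (Fin.rev i),
    coeff_prod_eq]
    simp only [esymmFun, aeval_eq_eval, Algebra.algebraMap_self, RingHom.id_apply]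
    rw [← mul_assoc, ← mul_pow]
    norm_num
  simp only [key]

variable (n) in
def Dpoly : MvPolynomial (Fin n) ℂ :=
  ∏ p ∈ Finset.univ.offDiag, (MvPolynomial.X p.1 - MvPolynomial.X p.2)

lemma eval_Dpoly (r : Fin n → ℂ) :
    MvPolynomial.eval r (Dpoly n) = ∏ p ∈ Finset.univ.offDiag, (r p.1 - r p.2) := by
  rw [Dpoly, map_prod]
  simp

lemma injective_of_eval_Dpoly_ne_zero {r : Fin n → ℂ}
    (h : MvPolynomial.eval r (Dpoly n) ≠ 0) : Function.Injective r := by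
  intro i j hij
  by_contra hne
  apply h
  rw [eval_Dpoly]
  refine Finset.prod_eq_zero (i := (i, j)) ?_ ?_
  · exact Finset.mem_offDiag.mpr ⟨Finset.mem_univ _, Finset.mem_univ _, hne⟩
  · simpa using sub_eq_zero.mpr hij

lemma Dpoly_isSymmetric : (Dpoly n).IsSymmetric := by
  intro σ
  rw [Dpoly, map_prod]
  simp only [map_sub, MvPolynomial.rename_X]
  refine Finset.prod_bij' (fun p _ => (σ p.1, σ p.2)) (fun p _ => (σ⁻¹ p.1, σ⁻¹ p.2))
    ?_ ?_ ?_ ?_ ?_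
  · intro p hp
    rw [Finset.mem_offDiag] at hp ⊢
    exact ⟨Finset.mem_univ _, Finset.mem_univ _, fun h => hp.2.2 (σ.injective h)⟩
  · intro p hp
    rw [Finset.mem_offDiag] at hp ⊢
    exact ⟨Finset.mem_univ _, Finset.mem_univ _, fun h => hp.2.2 (σ⁻¹.injective h)⟩
  · intro p hp; simp
  · intro p hp; simp
  · intro p hp; rfl

lemma vanish_everywhere {f : Matrix (Fin n) (Fin n) ℂ → ℂ} {F : MvPolynomial (Fin n × Fin n) ℂ}
    (hF : ∀ X, f X = MvPolynomial.eval (fun p => X p.1 p.2) F)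
    (hf : IsInvariantFun n f) (hdiag : ∀ d : Fin n → ℂ, f (diagonal d) = 0) :
    ∀ X, f X = 0 := by
  obtain ⟨q, hq⟩ := (MvPolynomial.esymmAlgHom_fin_bijective ℂ n).2 ⟨Dpoly n, Dpoly_isSymmetric⟩
  have hq' : MvPolynomial.aeval (esymmFun n) q = Dpoly n := by
    have h := congrArg Subtype.val hq
    rwa [MvPolynomial.esymmAlgHom_apply] at h
  set Δ : MvPolynomial (Fin n × Fin n) ℂ :=
    MvPolynomial.bind₁ (fun k : Fin n => cpc n (k : ℕ)) (pSign n q) with hΔdef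
  have hΔeval : ∀ (X : Matrix (Fin n) (Fin n) ℂ) (r : Fin n → ℂ),
      X.charpoly = ∏ i, (Polynomial.X - Polynomial.C (r i)) →
      MvPolynomial.eval (fun p => X p.1 p.2) Δ = MvPolynomial.eval r (Dpoly n) := by
    intro X r hr
    rw [hΔdef, ← aeval_eq_eval, MvPolynomial.aeval_bind₁]
    have h2 : (fun k : Fin n => MvPolynomial.aeval (fun p : Fin n × Fin n => X p.1 p.2)
        (cpc n (k : ℕ))) = fun k : Fin n => X.charpoly.coeff (k : ℕ) := by
      funext k; rw [aeval_eq_eval, eval_cpc]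
    rw [h2, aeval_eq_eval, eval_pSign q _ r (fun i => by rw [hr]), hq']
  have hmul : ∀ X : Matrix (Fin n) (Fin n) ℂ,
      MvPolynomial.eval (fun p => X p.1 p.2) Δ * f X = 0 := by
    intro X
    obtain ⟨r, hr⟩ := exists_roots X
    rw [hΔeval X r hr]
    by_cases hz : MvPolynomial.eval r (Dpoly n) = 0
    · rw [hz, zero_mul]
    · obtain ⟨g, hg⟩ := exists_conj_diagonal hr (injective_of_eval_Dpoly_ne_zero hz)
      have h3 : f X = 0 := by rw [hg, hf g (diagonal r), hdiag]
      rw [h3, mul_zero]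
  have hFz : Δ * F = 0 := by
    apply MvPolynomial.funext
    intro v
    have hv : (fun p : Fin n × Fin n =>
        (Matrix.of fun i j => v (i, j)) p.1 p.2) = v := funext fun p => rfl
    rw [_root_.map_mul, map_zero, ← hv, ← hF _, hmul]
  have hΔne : Δ ≠ 0 := by
    intro h0
    have hde : (diagonal (fun i : Fin n => ((i : ℕ) : ℂ))).charpoly
        = ∏ i : Fin n, (Polynomial.X - Polynomial.C (((i : ℕ) : ℂ))) := charpoly_diagonal _
    have h4 := hΔeval (diagonal fun i : Fin n => ((i : ℕ) : ℂ)) _ hde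
    rw [h0, map_zero] at h4
    have hne : MvPolynomial.eval (fun i : Fin n => ((i : ℕ) : ℂ)) (Dpoly n) ≠ 0 := by
      rw [eval_Dpoly]
      apply Finset.prod_ne_zero_iff.mpr
      intro p hp
      rw [Finset.mem_offDiag] at hp
      refine sub_ne_zero.mpr ?_
      simp only [ne_eq, Nat.cast_inj, Fin.val_inj]
      exact hp.2.2
    exact hne h4.symm
  have hF0 : F = 0 := by
    rcases mul_eq_zero.mp hFz with h | h
    · exact absurd h hΔne
    · exact h
  intro X
  rw [hF X, hF0, map_zero]

lemma eval_bind_cpc (p : MvPolynomial (Fin n) ℂ) (X : Matrix (Fin n) (Fin n) ℂ) :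
    MvPolynomial.eval (fun pr : Fin n × Fin n => X pr.1 pr.2)
        (MvPolynomial.bind₁ (fun k : Fin n => cpc n (k : ℕ)) p)
      = MvPolynomial.eval (fun k : Fin n => X.charpoly.coeff (k : ℕ)) p := by
  rw [← aeval_eq_eval, MvPolynomial.aeval_bind₁]
  have h2 : (fun k : Fin n => MvPolynomial.aeval (fun pr : Fin n × Fin n => X pr.1 pr.2)
      (cpc n (k : ℕ))) = fun k : Fin n => X.charpoly.coeff (k : ℕ) := by
    funext k; rw [aeval_eq_eval, eval_cpc]
  rw [h2, aeval_eq_eval]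

/-- The permutation matrix of `σ` as a unit. -/
def permUnit (σ : Equiv.Perm (Fin n)) : (Matrix (Fin n) (Fin n) ℂ)ˣ where
  val := σ.toPEquiv.toMatrix
  inv := σ.symm.toPEquiv.toMatrix
  val_inv := by
    rw [← PEquiv.toMatrix_trans, ← Equiv.toPEquiv_trans]
    simp
  inv_val := by
    rw [← PEquiv.toMatrix_trans, ← Equiv.toPEquiv_trans]
    simp

lemma permUnit_conj_diagonal (σ : Equiv.Perm (Fin n)) (d : Fin n → ℂ) :
    ((permUnit σ : (Matrix (Fin n) (Fin n) ℂ)ˣ) : Matrix (Fin n) (Fin n) ℂ) * diagonal d *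
      (((permUnit σ)⁻¹ : (Matrix (Fin n) (Fin n) ℂ)ˣ) : Matrix (Fin n) (Fin n) ℂ)
    = diagonal (d ∘ σ) := by
  show σ.toPEquiv.toMatrix * diagonal d * σ.symm.toPEquiv.toMatrix = diagonal (d ∘ σ)
  rw [PEquiv.toMatrix_toPEquiv_mul]
  have h := PEquiv.mul_toMatrix_toPEquiv (f := σ.symm)
    (M := (diagonal d).submatrix σ id) (α := ℂ)
  rw [h]
  ext i j
  simp only [submatrix_apply, Equiv.symm_symm, id_eq]
  by_cases hij : i = j
  · subst hij; simp [diagonal_apply_eq]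
  · rw [diagonal_apply_ne _ hij, diagonal_apply_ne]
    exact fun hc => hij (σ.injective hc)

/-- signed elementary symmetric polynomials: the charpoly coefficients of the diagonal. -/
def eD : Fin n → MvPolynomial (Fin n) ℂ := fun i =>
  MvPolynomial.C ((-1 : ℂ) ^ (((Fin.rev i : Fin n) : ℕ) + 1)) *
    MvPolynomial.esymm (Fin n) ℂ (((Fin.rev i : Fin n) : ℕ) + 1)

lemma eval_eD (d : Fin n → ℂ) (i : Fin n) :
    MvPolynomial.eval d (eD i) = (∏ j, (Polynomial.X - Polynomial.C (d j))).coeff (i : ℕ) := by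
  have h := coeff_prod_eq d (Fin.rev i)
  rw [Fin.rev_rev] at h
  rw [eD, _root_.map_mul, MvPolynomial.eval_C, ← h]

lemma eval_bind_eD (p : MvPolynomial (Fin n) ℂ) (d : Fin n → ℂ) :
    MvPolynomial.eval d (MvPolynomial.bind₁ eD p)
      = MvPolynomial.eval (fun i : Fin n =>
          (∏ j, (Polynomial.X - Polynomial.C (d j))).coeff (i : ℕ)) p := by
  rw [← aeval_eq_eval, MvPolynomial.aeval_bind₁]
  have h2 : (fun i : Fin n => MvPolynomial.aeval d (eD i))
      = fun i : Fin n => (∏ j, (Polynomial.X - Polynomial.C (d j))).coeff (i : ℕ) := by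
    funext i; rw [aeval_eq_eval, eval_eD]
  rw [h2, aeval_eq_eval]

def phiG : Fin n → MvPolynomial (Fin n) ℂ := fun i =>
  MvPolynomial.C ((-1 : ℂ) ^ (((Fin.rev i : Fin n) : ℕ) + 1)) * MvPolynomial.X (Fin.rev i)

def psiG : Fin n → MvPolynomial (Fin n) ℂ := fun j =>
  MvPolynomial.C ((-1 : ℂ) ^ ((j : ℕ) + 1)) * MvPolynomial.X (Fin.rev j)

lemma psi_phi (p : MvPolynomial (Fin n) ℂ) :
    MvPolynomial.bind₁ psiG (MvPolynomial.bind₁ phiG p) = p := by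
  rw [MvPolynomial.bind₁_bind₁]
  have h : (fun i : Fin n => MvPolynomial.bind₁ psiG (phiG i))
      = fun i : Fin n => (MvPolynomial.X i : MvPolynomial (Fin n) ℂ) := by
    funext i
    rw [phiG, _root_.map_mul, MvPolynomial.bind₁_C_right, MvPolynomial.bind₁_X_right, psiG,
      Fin.rev_rev, ← mul_assoc, ← MvPolynomial.C_mul, ← mul_pow]
    norm_num
  rw [h]
  have h2 : (MvPolynomial.bind₁ fun i : Fin n =>
      (MvPolynomial.X i : MvPolynomial (Fin n) ℂ)) p = p := by
    rw [MvPolynomial.bind₁_X_left]; rfl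
  exact h2

lemma bind_eD_eq (p : MvPolynomial (Fin n) ℂ) :
    MvPolynomial.bind₁ eD p
      = MvPolynomial.bind₁ (esymmFun n) (MvPolynomial.bind₁ phiG p) := by
  rw [MvPolynomial.bind₁_bind₁]
  have h : (fun i : Fin n => MvPolynomial.bind₁ (esymmFun n) (phiG i)) = eD := by
    funext i
    rw [phiG, _root_.map_mul, MvPolynomial.bind₁_C_right, MvPolynomial.bind₁_X_right]
    rfl
  rw [h]

lemma aeval_esymmFun_injective :
    Function.Injective (fun p : MvPolynomial (Fin n) ℂ =>
      MvPolynomial.aeval (esymmFun n) p) := by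
  intro p q h
  have h2 : MvPolynomial.esymmAlgHom (Fin n) ℂ n p = MvPolynomial.esymmAlgHom (Fin n) ℂ n q := by
    apply Subtype.ext
    rw [MvPolynomial.esymmAlgHom_apply, MvPolynomial.esymmAlgHom_apply]
    exact h
  exact (MvPolynomial.esymmAlgHom_fin_bijective ℂ n).1 h2

lemma bind_eD_injective :
    Function.Injective (fun p : MvPolynomial (Fin n) ℂ => MvPolynomial.bind₁ eD p) := by
  intro p q h
  simp only [bind_eD_eq] at h
  have h2 : MvPolynomial.bind₁ phiG p = MvPolynomial.bind₁ phiG q := by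
    apply aeval_esymmFun_injective
    simp only [MvPolynomial.aeval_eq_bind₁]
    exact h
  have := congrArg (fun x => MvPolynomial.bind₁ psiG x) h2
  simpa only [psi_phi] using this

lemma part1 (f₁ f₂ : Matrix (Fin n) (Fin n) ℂ → ℂ)
    (hp₁ : IsPolyFun n f₁) (hi₁ : IsInvariantFun n f₁)
    (hp₂ : IsPolyFun n f₂) (hi₂ : IsInvariantFun n f₂)
    (hd : ∀ d : Fin n → ℂ, f₁ (diagonal d) = f₂ (diagonal d)) : f₁ = f₂ := by
  obtain ⟨F₁, hF₁⟩ := hp₁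
  obtain ⟨F₂, hF₂⟩ := hp₂
  have key := vanish_everywhere (f := fun X => f₁ X - f₂ X) (F := F₁ - F₂)
    (fun X => by rw [map_sub, ← hF₁, ← hF₂])
    (fun g X => by simp only []; rw [hi₁ g X, hi₂ g X])
    (fun d => by rw [hd d, sub_self])
  funext X
  exact sub_eq_zero.mp (key X)

lemma part2 (s : MvPolynomial (Fin n) ℂ) (hs : s.IsSymmetric) :
    ∃ f : Matrix (Fin n) (Fin n) ℂ → ℂ, IsPolyFun n f ∧ IsInvariantFun n f ∧
      ∀ d : Fin n → ℂ, f (diagonal d) = MvPolynomial.eval d s := by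
  obtain ⟨q, hq⟩ := (MvPolynomial.esymmAlgHom_fin_bijective ℂ n).2 ⟨s, hs⟩
  have hq' : MvPolynomial.aeval (esymmFun n) q = s := by
    have h := congrArg Subtype.val hq
    rwa [MvPolynomial.esymmAlgHom_apply] at h
  refine ⟨fun X => MvPolynomial.eval (fun k : Fin n => X.charpoly.coeff (k : ℕ)) (pSign n q),
    ⟨MvPolynomial.bind₁ (fun k : Fin n => cpc n (k : ℕ)) (pSign n q),
      fun X => (eval_bind_cpc _ X).symm⟩, ?_, ?_⟩
  · intro g X
    simp only []
    rw [charpoly_units_conj g X]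
  · intro d
    show MvPolynomial.eval (fun k : Fin n => (diagonal d).charpoly.coeff (k : ℕ)) (pSign n q)
      = MvPolynomial.eval d s
    rw [eval_pSign q _ d (fun i => by rw [charpoly_diagonal]), hq']

lemma part3exists (f : Matrix (Fin n) (Fin n) ℂ → ℂ)
    (hp : IsPolyFun n f) (hi : IsInvariantFun n f) :
    ∃ p : MvPolynomial (Fin n) ℂ, ∀ X : Matrix (Fin n) (Fin n) ℂ,
      f X = MvPolynomial.eval (fun i : Fin n => X.charpoly.coeff (i : ℕ)) p := by
  obtain ⟨F, hF⟩ := hp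
  set s : MvPolynomial (Fin n) ℂ := MvPolynomial.aeval
    (fun pr : Fin n × Fin n =>
      if pr.1 = pr.2 then (MvPolynomial.X pr.1 : MvPolynomial (Fin n) ℂ) else 0) F with hs_def
  have hseval : ∀ d : Fin n → ℂ, MvPolynomial.eval d s = f (diagonal d) := by
    intro d
    rw [hs_def, ← aeval_eq_eval, MvPolynomial.aeval_eq_bind₁ (R := ℂ)
      (fun pr : Fin n × Fin n =>
        if pr.1 = pr.2 then (MvPolynomial.X pr.1 : MvPolynomial (Fin n) ℂ) else 0),
      MvPolynomial.aeval_bind₁]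
    have h2 : (fun pr : Fin n × Fin n => MvPolynomial.aeval d
        (if pr.1 = pr.2 then (MvPolynomial.X pr.1 : MvPolynomial (Fin n) ℂ) else 0))
        = fun pr : Fin n × Fin n => diagonal d pr.1 pr.2 := by
      funext pr
      by_cases h : pr.1 = pr.2
      · rw [if_pos h, MvPolynomial.aeval_X, diagonal_apply, if_pos h]
      · rw [if_neg h, map_zero, diagonal_apply, if_neg h]
    rw [h2, aeval_eq_eval, ← hF]
  have hsym : s.IsSymmetric := by
    intro σ
    apply MvPolynomial.funext
    intro d
    rw [MvPolynomial.eval_rename, hseval, hseval]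
    rw [← permUnit_conj_diagonal σ d]
    exact hi (permUnit σ) (diagonal d)
  obtain ⟨q, hq⟩ := (MvPolynomial.esymmAlgHom_fin_bijective ℂ n).2 ⟨s, hsym⟩
  have hq' : MvPolynomial.aeval (esymmFun n) q = s := by
    have h := congrArg Subtype.val hq
    rwa [MvPolynomial.esymmAlgHom_apply] at h
  refine ⟨pSign n q, ?_⟩
  have heq : f = fun X => MvPolynomial.eval
      (fun i : Fin n => X.charpoly.coeff (i : ℕ)) (pSign n q) := by
    apply part1 f _ ⟨F, hF⟩ hi
      ⟨MvPolynomial.bind₁ (fun k : Fin n => cpc n (k : ℕ)) (pSign n q),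
        fun X => (eval_bind_cpc _ X).symm⟩
      (fun g X => by
        show MvPolynomial.eval (fun i : Fin n =>
            ((g : Matrix (Fin n) (Fin n) ℂ) * X *
              ((g⁻¹ : GL (Fin n) ℂ) : Matrix (Fin n) (Fin n) ℂ)).charpoly.coeff (i : ℕ))
            (pSign n q)
          = MvPolynomial.eval (fun i : Fin n => X.charpoly.coeff (i : ℕ)) (pSign n q)
        rw [charpoly_units_conj g X])
    intro d
    show f (diagonal d) = MvPolynomial.eval
      (fun i : Fin n => (diagonal d).charpoly.coeff (i : ℕ)) (pSign n q)
    rw [eval_pSign q _ d (fun i => by rw [charpoly_diagonal]), hq', hseval]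
  intro X
  rw [heq]

lemma part3uniq (f : Matrix (Fin n) (Fin n) ℂ → ℂ) (p₁ p₂ : MvPolynomial (Fin n) ℂ)
    (h₁ : ∀ X : Matrix (Fin n) (Fin n) ℂ,
      f X = MvPolynomial.eval (fun i : Fin n => X.charpoly.coeff (i : ℕ)) p₁)
    (h₂ : ∀ X : Matrix (Fin n) (Fin n) ℂ,
      f X = MvPolynomial.eval (fun i : Fin n => X.charpoly.coeff (i : ℕ)) p₂) :
    p₁ = p₂ := by
  apply bind_eD_injective
  apply MvPolynomial.funext
  intro d
  rw [eval_bind_eD, eval_bind_eD]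
  have e₁ := (h₁ (diagonal d)).symm.trans (h₂ (diagonal d))
  have hcd : (fun i : Fin n => (diagonal d).charpoly.coeff (i : ℕ))
      = fun i : Fin n => (∏ j, (Polynomial.X - Polynomial.C (d j))).coeff (i : ℕ) := by
    funext i
    rw [charpoly_diagonal]
  rw [← hcd]
  exact e₁

end

end ChevGL


/-- **Chevalley restriction for `gl_n`.**  Restriction to the diagonal matrices is an
isomorphism from the conjugation-invariant polynomial functions on `gl_n(ℂ)` onto the
symmetric polynomial functions in `n` variables: it is injective, its image is exactly the
symmetric polynomials, and the invariant ring is freely generated by the coefficients of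
the characteristic polynomial (of degrees `1, 2, …, n`). -/
theorem chevalley_restriction_gl :
    (∀ f₁ f₂ : Matrix (Fin n) (Fin n) ℂ → ℂ,
      IsPolyFun n f₁ → IsInvariantFun n f₁ → IsPolyFun n f₂ → IsInvariantFun n f₂ →
      (∀ d : Fin n → ℂ, f₁ (diagonal d) = f₂ (diagonal d)) → f₁ = f₂) ∧
    (∀ s : MvPolynomial (Fin n) ℂ, s.IsSymmetric →
      ∃ f : Matrix (Fin n) (Fin n) ℂ → ℂ, IsPolyFun n f ∧ IsInvariantFun n f ∧
        ∀ d : Fin n → ℂ, f (diagonal d) = MvPolynomial.eval d s) ∧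
    (∀ f : Matrix (Fin n) (Fin n) ℂ → ℂ, IsPolyFun n f → IsInvariantFun n f →
      ∃! p : MvPolynomial (Fin n) ℂ, ∀ X : Matrix (Fin n) (Fin n) ℂ,
        f X = MvPolynomial.eval (fun i : Fin n => X.charpoly.coeff (i : ℕ)) p) := by
  refine ⟨fun f₁ f₂ hp₁ hi₁ hp₂ hi₂ hd => ChevGL.part1 f₁ f₂ hp₁ hi₁ hp₂ hi₂ hd,
    fun s hs => ChevGL.part2 s hs, fun f hp hi => ?_⟩
  obtain ⟨p, hp'⟩ := ChevGL.part3exists f hp hi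
  exact ⟨p, hp', fun y hy => ChevGL.part3uniq f y p hy hp'⟩
end
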